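/- Let G be a finite abelian group, G₀ ⊆ G a subset, and g ∈ G₀ \ {0} with g ∈ ⟨G₀ \ {g}⟩. If ord(g) is a prime power, then there exists a subset E ⊆ G₀ \ {g} with |E| ≤ r(G) such that g ∈ ⟨E⟩. -/

import Mathlib

/- Common definitions for zero-sum theory over a finite abelian group. -/

variable {G : Type*} [AddCommGroup G]

/-- `S` is a zero-sum sequence over the subset `G₀`:
a finite multiset of elements of `G₀` whose sum is `0`. -/
def IsZeroSumSeq (G₀ : Set G) (S : Multiset G) : Prop :=
  (∀ g ∈ S, g ∈ G₀) ∧ S.sum = 0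

/-- `A` is an atom (minimal zero-sum sequence) over `G₀`: a nonempty zero-sum
sequence over `G₀` that cannot be written as the union of two nonempty
zero-sum sequences, i.e. has no proper nonempty zero-sum subsequence. -/
def IsAtomOver (G₀ : Set G) (A : Multiset G) : Prop :=
  IsZeroSumSeq G₀ A ∧ A ≠ 0 ∧
    ∀ B : Multiset G, B ≤ A → B ≠ 0 → B ≠ A → B.sum ≠ 0

/-- The set of lengths `L(B)` of a zero-sum sequence `B` over `G₀`: all `k`
such that `B` is a union of `k` atoms over `G₀`. -/
def lengthSet (G₀ : Set G) (B : Multiset G) : Set ℕ :=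
  { k | ∃ f : Multiset (Multiset G), f.card = k ∧ (∀ A ∈ f, IsAtomOver G₀ A) ∧ f.sum = B }

/-- The set of successive distances `Δ(L)` of a set `L ⊆ ℕ`. -/
def distSet (L : Set ℕ) : Set ℕ :=
  { d | ∃ a ∈ L, ∃ b ∈ L, a < b ∧ b - a = d ∧ ∀ c ∈ L, a < c → c < b → False }

/-- The set of distances `Δ(G₀)`: union of `Δ(L(B))` over all nonempty
zero-sum sequences `B` over `G₀`. -/
def DeltaOf (G₀ : Set G) : Set ℕ :=
  ⋃ B : Multiset G, ⋃ (_ : B ≠ 0), distSet (lengthSet G₀ B)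

/-- The set of minimal distances `Δ*(G) = { min Δ(G₀) : G₀ ⊆ G, Δ(G₀) ≠ ∅ }`. -/
def DeltaStar (G : Type*) [AddCommGroup G] : Set ℕ :=
  { d | ∃ G₀ : Set G, (DeltaOf G₀).Nonempty ∧ sInf (DeltaOf G₀) = d }

/-- The cross number `k(S) = Σ_{g ∈ S} 1/ord(g)` (with multiplicity). -/
noncomputable def crossNumber (S : Multiset G) : ℚ :=
  (S.map fun g => ((addOrderOf g : ℚ))⁻¹).sum

/-- `G₀` is an LCN-set: every atom over `G₀` has cross number at least `1`. -/
def IsLCNSet (G₀ : Set G) : Prop :=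
  ∀ A : Multiset G, IsAtomOver G₀ A → 1 ≤ crossNumber A

/-- `r` is the rank of the finite abelian group `G`: the number of summands
in the invariant factor decomposition `G ≅ C_{n₁} ⊕ ... ⊕ C_{n_r}` with
`1 < n₁ ∣ n₂ ∣ ... ∣ n_r`. -/
def IsRank (G : Type*) [AddCommGroup G] (r : ℕ) : Prop :=
  ∃ d : Fin r → ℕ, (∀ i, 1 < d i) ∧ (∀ i j, i ≤ j → d i ∣ d j) ∧
    Nonempty (G ≃+ ((i : Fin r) → ZMod (d i)))

/-- The system of sets of lengths `𝓛(G) = { L(B) : B ∈ 𝓑(G) nonempty }`. -/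
def LSystem (G : Type*) [AddCommGroup G] : Set (Set ℕ) :=
  { L | ∃ B : Multiset G, B ≠ 0 ∧ IsZeroSumSeq (Set.univ : Set G) B ∧
      lengthSet (Set.univ : Set G) B = L }

/-- `d` is the greatest common divisor of the set `S ⊆ ℕ`. -/
def IsSetGcd (S : Set ℕ) (d : ℕ) : Prop :=
  (∀ s ∈ S, d ∣ s) ∧ ∀ e : ℕ, (∀ s ∈ S, e ∣ s) → e ∣ d


/-- The `p`-smul endomorphism of a subgroup. -/
private def smulHomAux (p : ℕ) (H : AddSubgroup G) : H →+ H :=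
  AddMonoidHom.mk' (fun x => p • x) (fun a b => smul_add p a b)

private lemma card_quot_smul_le (p : ℕ) [Fintype G] (H : AddSubgroup G) :
    Nat.card (H ⧸ (smulHomAux p H).range) ≤ Nat.card {x : G // p • x = 0} := by
  classical
  have h1 := AddSubgroup.card_eq_card_quotient_mul_card_addSubgroup (smulHomAux p H).range
  have h2 := AddSubgroup.card_eq_card_quotient_mul_card_addSubgroup (smulHomAux p H).ker
  have h3 : Nat.card (↥H ⧸ (smulHomAux p H).ker) = Nat.card (smulHomAux p H).range :=
    Nat.card_congr (QuotientAddGroup.quotientKerEquivRange (smulHomAux p H)).toEquiv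
  have hpos : 0 < Nat.card (smulHomAux p H).range := Nat.card_pos
  have hQ : Nat.card (↥H ⧸ (smulHomAux p H).range) = Nat.card (smulHomAux p H).ker := by
    have := h1.symm.trans h2
    rw [h3] at this
    exact Nat.eq_of_mul_eq_mul_right hpos (by linarith [this])
  rw [hQ]
  have hinj : Function.Injective
      (fun x : (smulHomAux p H).ker => (⟨(x.1 : G), by
        have hx := x.2
        simp only [AddMonoidHom.mem_ker, smulHomAux, AddMonoidHom.mk'_apply] at hx
        exact congrArg Subtype.val hx⟩ : {x : G // p • x = 0})) := by
    intro x y h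
    rw [Subtype.ext_iff] at h
    simp only at h
    exact Subtype.ext (Subtype.ext h)
  exact Nat.card_le_card_of_injective _ hinj

private lemma card_zmod_torsion_le (n p : ℕ) [NeZero n] (hp : 0 < p) :
    Nat.card {y : ZMod n // p • y = 0} ≤ p := by
  classical
  have h := IsAddCyclic.card_nsmul_eq_zero_le (α := ZMod n) hp
  rw [Nat.card_eq_fintype_card, Fintype.card_subtype]
  exact h

private lemma card_torsion_le [Fintype G] {r : ℕ} (hr : IsRank G r) (p : ℕ) (hp : 0 < p) :
    Nat.card {x : G // p • x = 0} ≤ p ^ r := by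
  classical
  obtain ⟨d, hd1, -, ⟨e⟩⟩ := hr
  haveI : ∀ i, NeZero (d i) := fun i => ⟨by have := hd1 i; omega⟩
  have hmem : ∀ (x : {x : G // p • x = 0}) (i : Fin r), p • (e x.1 i) = 0 := by
    intro x i
    rw [← Pi.smul_apply, ← map_nsmul, x.2, map_zero, Pi.zero_apply]
  set F : {x : G // p • x = 0} → ((i : Fin r) → {y : ZMod (d i) // p • y = 0}) :=
    fun x i => ⟨e x.1 i, hmem x i⟩ with hF
  have hinj : Function.Injective F := by
    intro x y h
    have hfun : ∀ i, e x.1 i = e y.1 i := fun i => congrArg Subtype.val (congrFun h i)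
    exact Subtype.ext (e.injective (funext hfun))
  calc Nat.card {x : G // p • x = 0}
      ≤ Nat.card ((i : Fin r) → {y : ZMod (d i) // p • y = 0}) :=
        Nat.card_le_card_of_injective F hinj
    _ = ∏ i : Fin r, Nat.card {y : ZMod (d i) // p • y = 0} := Nat.card_pi
    _ ≤ ∏ _i : Fin r, p := Finset.prod_le_prod (fun _ _ => Nat.zero_le _)
        (fun i _ => card_zmod_torsion_le (d i) p hp)
    _ = p ^ r := by simp

private lemma exists_redundant (p a : ℕ) (hp : p.Prime) [Fintype G] [DecidableEq G] {r : ℕ}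
    (hcard : Nat.card {x : G // p • x = 0} ≤ p ^ r)
    (Y : Finset G) (hY : ∀ y ∈ Y, p ^ a • y = 0) (hs : r < Y.card) :
    ∃ y ∈ Y, (Y : Set G) ⊆ Submodule.span ℤ ((Y.erase y : Finset G) : Set G) := by
  classical
  haveI : NeZero p := ⟨hp.pos.ne'⟩
  set s := Y.card with hsY
  set v : Fin s → G := fun i => ((Y.equivFin.symm i : Y) : G) with hv
  have hv_mem : ∀ i, v i ∈ Y := fun i => (Y.equivFin.symm i).2
  have hv_inj : Function.Injective v := by
    intro i j h
    have : (Y.equivFin.symm i : Y) = (Y.equivFin.symm j : Y) := Subtype.ext h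
    exact Y.equivFin.symm.injective this
  have hv_range : Set.range v = (Y : Set G) := by
    ext x
    constructor
    · rintro ⟨i, rfl⟩; exact hv_mem i
    · intro hx
      exact ⟨Y.equivFin ⟨x, hx⟩, by simp [hv]⟩
  set H : Submodule ℤ G := Submodule.span ℤ (Y : Set G) with hH
  set HA : AddSubgroup G := H.toAddSubgroup with hHA
  -- the pigeonhole map
  have hsum_mem : ∀ c : Fin s → ZMod p, (∑ i, ((c i).val : ℤ) • v i) ∈ HA := by
    intro c
    exact Submodule.sum_mem _ fun i _ =>
      Submodule.smul_mem _ _ (Submodule.subset_span (hv_mem i))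
  set Φ : (Fin s → ZMod p) → (HA ⧸ (smulHomAux p HA).range) :=
    fun c => QuotientAddGroup.mk ⟨∑ i, ((c i).val : ℤ) • v i, hsum_mem c⟩ with hΦ
  have hcardlt : Fintype.card (HA ⧸ (smulHomAux p HA).range) <
      Fintype.card (Fin s → ZMod p) := by
    have h1 : Fintype.card (Fin s → ZMod p) = p ^ s := by
      simp [ZMod.card]
    have h2 : Fintype.card (HA ⧸ (smulHomAux p HA).range) ≤ p ^ r := by
      rw [← Nat.card_eq_fintype_card]
      exact (card_quot_smul_le p HA).trans hcard
    have h3 : p ^ r < p ^ s := Nat.pow_lt_pow_right hp.one_lt hs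
    omega
  obtain ⟨c, c', hne, heq⟩ := Fintype.exists_ne_map_eq_of_card_lt Φ hcardlt
  -- extract relation
  rw [hΦ] at heq
  have hdiff := (QuotientAddGroup.eq ).mp heq
  obtain ⟨h, hh⟩ := hdiff
  -- h : HA, smulHomAux p HA h = -x + y
  have hhG : p • (h : G) = -(∑ i, ((c i).val : ℤ) • v i) + ∑ i, ((c' i).val : ℤ) • v i := by
    have := congrArg (Subtype.val) hh
    simpa [smulHomAux] using this
  -- express h as combination
  have hhH : (h : G) ∈ Submodule.span ℤ (Set.range v) := by
    rw [hv_range]; exact h.2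
  obtain ⟨dcoef, hd⟩ := (Submodule.mem_span_range_iff_exists_fun ℤ).mp hhH
  set e : Fin s → ℤ := fun i => ((c' i).val : ℤ) - ((c i).val : ℤ) - p * dcoef i with he
  have hrel : ∑ i, e i • v i = 0 := by
    have hps : p • (h : G) = ∑ i, ((p : ℤ) * dcoef i) • v i := by
      rw [← hd, Finset.smul_sum]
      congr 1
      ext i
      rw [← Nat.cast_smul_eq_nsmul ℤ p, smul_smul]
    rw [hps] at hhG
    have : ∑ i, e i • v i
        = ∑ i, (((c' i).val : ℤ) • v i) - ∑ i, (((c i).val : ℤ) • v i)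
          - ∑ i, ((p : ℤ) * dcoef i) • v i := by
      rw [← Finset.sum_sub_distrib, ← Finset.sum_sub_distrib]
      congr 1
      ext i
      rw [he]
      push_cast
      rw [sub_smul, sub_smul]
    rw [this, hhG]
    abel
  -- find index with unit coefficient
  have hj : ∃ j, c j ≠ c' j := by
    by_contra hcon
    push_neg at hcon
    exact hne (funext hcon)
  obtain ⟨j, hj⟩ := hj
  have hpj : ¬ (p : ℤ) ∣ e j := by
    intro hdvd
    apply hj
    have h0 : ((e j : ℤ) : ZMod p) = 0 := by
      rw [ZMod.intCast_zmod_eq_zero_iff_dvd]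
      exact_mod_cast hdvd
    rw [he] at h0
    push_cast at h0
    simp [ZMod.natCast_val, ZMod.cast_id, ZMod.natCast_self, sub_eq_zero] at h0
    exact h0.symm
  have hprime : Prime (p : ℤ) := Int.prime_iff_natAbs_prime.mpr (by simpa using hp)
  have hcop : IsCoprime ((p : ℤ) ^ a) (e j) :=
    (hprime.coprime_iff_not_dvd.mpr hpj).pow_left
  obtain ⟨u, w, huw⟩ := hcop
  have htors : ((p : ℤ) ^ a) • v j = 0 := by
    have h1 := hY (v j) (hv_mem j)
    rw [← Nat.cast_pow, Nat.cast_smul_eq_nsmul]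
    exact h1
  have hsum_erase : e j • v j = - ∑ i ∈ Finset.univ.erase j, e i • v i := by
    have h2 := hrel
    rw [← Finset.add_sum_erase _ _ (Finset.mem_univ j)] at h2
    exact eq_neg_of_add_eq_zero_left h2
  have hvj : v j ∈ Submodule.span ℤ ((Y.erase (v j) : Finset G) : Set G) := by
    set S := Submodule.span ℤ ((Y.erase (v j) : Finset G) : Set G) with hS
    have hv1 : v j = w • (e j • v j) := by
      have h3 : (u * (p:ℤ)^a + w * e j) • v j = v j := by rw [huw, one_smul]
      rw [add_smul, mul_smul, mul_smul, htors, smul_zero, zero_add] at h3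
      exact h3.symm
    rw [hv1, hsum_erase]
    refine Submodule.smul_mem _ _ (Submodule.neg_mem _ (Submodule.sum_mem _ ?_))
    intro i hi
    have hij : i ≠ j := (Finset.mem_erase.mp hi).1
    refine Submodule.smul_mem _ _ (Submodule.subset_span ?_)
    exact Finset.mem_coe.mpr
      (Finset.mem_erase.mpr ⟨fun hcon => hij (hv_inj hcon), hv_mem i⟩)
  refine ⟨v j, hv_mem j, ?_⟩
  intro x hx
  rcases eq_or_ne x (v j) with rfl | hxne
  · exact hvj
  · exact Submodule.subset_span
      (Finset.mem_coe.mpr (Finset.mem_erase.mpr ⟨hxne, Finset.mem_coe.mp hx⟩))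

private lemma span_small (p a : ℕ) (hp : p.Prime) [Fintype G] [DecidableEq G] {r : ℕ}
    (hcard : Nat.card {x : G // p • x = 0} ≤ p ^ r) (Y : Finset G) :
    (∀ y ∈ Y, p ^ a • y = 0) → ∀ g ∈ Submodule.span ℤ (Y : Set G),
    ∃ E : Finset G, E ⊆ Y ∧ E.card ≤ r ∧ g ∈ Submodule.span ℤ (E : Set G) := by
  induction Y using Finset.strongInduction with
  | _ Y IH =>
    intro hY g hg
    by_cases hle : Y.card ≤ r
    · exact ⟨Y, Finset.Subset.refl Y, hle, hg⟩
    · obtain ⟨y, hy, hsub⟩ := exists_redundant p a hp hcard Y hY (lt_of_not_ge hle)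
      have hspan : Submodule.span ℤ (Y : Set G) ≤
          Submodule.span ℤ ((Y.erase y : Finset G) : Set G) :=
        Submodule.span_le.mpr hsub
      obtain ⟨E, hE1, hE2, hE3⟩ := IH (Y.erase y) (Finset.erase_ssubset hy)
        (fun z hz => hY z (Finset.mem_of_mem_erase hz)) g (hspan hg)
      exact ⟨E, hE1.trans (Finset.erase_subset _ _), hE2, hE3⟩

theorem mem_closure_small_subset_of_primePow_order
    (G : Type*) [AddCommGroup G] [Fintype G] (r : ℕ)
    (hr : IsRank G r) (G₀ : Set G) (g : G)
    (hg : g ∈ G₀) (hg0 : g ≠ 0)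
    (hgen : g ∈ AddSubgroup.closure (G₀ \ {g}))
    (hpp : IsPrimePow (addOrderOf g)) :
    ∃ E : Set G, E ⊆ G₀ \ {g} ∧ E.ncard ≤ r ∧ g ∈ AddSubgroup.closure E := by
  classical
  obtain ⟨p, k, hpp', hk, hord⟩ := hpp
  have hp : p.Prime := Nat.prime_iff.mpr hpp'
  set n := Fintype.card G with hn
  have hn0 : n ≠ 0 := Fintype.card_ne_zero
  set a := n.factorization p with ha
  set m := n / p ^ a with hm
  have hmn : p ^ a * m = n := Nat.ordProj_mul_ordCompl_eq_self n p
  have hordn : addOrderOf g ∣ n := addOrderOf_dvd_card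
  have hka : k ≤ a := (Nat.Prime.pow_dvd_iff_le_factorization hp hn0).mp
    (by rw [hord]; exact hordn)
  have hcop : IsCoprime (m : ℤ) (((p : ℤ)) ^ a) := by
    have h1 : Nat.Coprime m (p ^ a) :=
      ((Nat.coprime_ordCompl hp hn0).symm).pow_right a
    have := Nat.isCoprime_iff_coprime.mpr h1
    push_cast at this
    exact this
  obtain ⟨u, w, huw⟩ := hcop
  set c : ℤ := u * m with hc
  -- c • x is p^a-torsion for all x
  have hc1 : ∀ x : G, p ^ a • (c • x) = 0 := by
    intro x
    have hnx : (n : ℤ) • x = 0 := by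
      rw [Nat.cast_smul_eq_nsmul]
      exact card_nsmul_eq_zero
    calc p ^ a • (c • x) = ((p ^ a : ℕ) : ℤ) • (c • x) := by
          rw [Nat.cast_smul_eq_nsmul]
      _ = (((p ^ a : ℕ) : ℤ) * (u * m)) • x := by rw [smul_smul, hc]
      _ = u • ((((p : ℕ) ^ a * m : ℕ) : ℤ) • x) := by
          rw [smul_smul]; push_cast; ring_nf
      _ = u • ((n : ℤ) • x) := by rw [hmn]
      _ = 0 := by rw [hnx, smul_zero]
  -- c • g = g
  have hc2 : c • g = g := by
    have hpag : ((p : ℤ) ^ a) • g = 0 := by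
      have hdvd : addOrderOf g ∣ p ^ a := by
        rw [← hord]; exact pow_dvd_pow p hka
      have := addOrderOf_dvd_iff_nsmul_eq_zero.mp hdvd
      rw [← Nat.cast_pow, Nat.cast_smul_eq_nsmul]
      exact this
    have : c • g = (1 - w * (p : ℤ) ^ a) • g := by
      rw [hc]
      congr 1
      linarith [huw]
    rw [this, sub_smul, one_smul, mul_smul, hpag, smul_zero, sub_zero]
  -- from closure to span
  have hspan0 : g ∈ Submodule.span ℤ (G₀ \ {g}) := by
    rw [← Submodule.mem_toAddSubgroup, Submodule.span_int_eq_addSubgroupClosure]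
    exact hgen
  obtain ⟨T, hT, hgT⟩ := Submodule.mem_span_finite_of_mem_span hspan0
  -- multiply by c
  set Y : Finset G := T.image (fun x => c • x) with hY
  have hgY : g ∈ Submodule.span ℤ (Y : Set G) := by
    have hmap := Submodule.map_span (c • (LinearMap.id : G →ₗ[ℤ] G)) (T : Set G)
    have hmem : c • g ∈ Submodule.map (c • (LinearMap.id : G →ₗ[ℤ] G))
        (Submodule.span ℤ (T : Set G)) := ⟨g, hgT, rfl⟩
    rw [hmap] at hmem
    rw [← hc2]
    convert hmem using 2
    rw [hY]
    simp [Finset.coe_image]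
  have hYtor : ∀ y ∈ Y, p ^ a • y = 0 := by
    intro y hy
    rw [hY, Finset.mem_image] at hy
    obtain ⟨x, -, rfl⟩ := hy
    exact hc1 x
  obtain ⟨E', hE'1, hE'2, hE'3⟩ := span_small p a hp (card_torsion_le hr p hp.pos) Y hYtor g hgY
  -- choose preimages
  set ρ : G → G := fun y => if h : ∃ x ∈ T, c • x = y then h.choose else 0 with hρ
  have hρspec : ∀ y ∈ E', ρ y ∈ T ∧ c • (ρ y) = y := by
    intro y hy
    have hy' : y ∈ Y := hE'1 hy
    rw [hY, Finset.mem_image] at hy'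
    obtain ⟨x, hx, hxy⟩ := hy'
    have hex : ∃ x ∈ T, c • x = y := ⟨x, hx, hxy⟩
    rw [hρ]
    simp only [dif_pos hex]
    exact ⟨hex.choose_spec.1, hex.choose_spec.2⟩
  set E : Finset G := E'.image ρ with hE
  refine ⟨(E : Set G), ?_, ?_, ?_⟩
  · intro z hz
    rw [Finset.mem_coe, hE, Finset.mem_image] at hz
    obtain ⟨y, hy, rfl⟩ := hz
    exact hT (Finset.mem_coe.mpr ((hρspec y hy).1))
  · rw [Set.ncard_coe_finset]
    exact (Finset.card_image_le).trans hE'2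
  · have hle : Submodule.span ℤ ((E' : Finset G) : Set G) ≤
        Submodule.span ℤ ((E : Finset G) : Set G) := by
      rw [Submodule.span_le]
      intro y hy
      have hy' := Finset.mem_coe.mp hy
      obtain ⟨hmem, hcy⟩ := hρspec y hy'
      have : ρ y ∈ Submodule.span ℤ ((E : Finset G) : Set G) :=
        Submodule.subset_span (Finset.mem_coe.mpr (Finset.mem_image_of_mem ρ hy'))
      rw [← hcy]
      exact Submodule.smul_mem _ c this
    have hgE : g ∈ Submodule.span ℤ ((E : Finset G) : Set G) := hle hE'3
    rw [← Submodule.span_int_eq_addSubgroupClosure]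
    exact (Submodule.mem_toAddSubgroup _).mpr hgE
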